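/- arXiv:1005.1216 — 2 statements merged into one kernel-verified Lean document; each statement's English description precedes it below -/
import Mathlib

section
/- The formal power series f_TM(x) = ∏_{n=0}^∞ (1 − x^{2^n}) = ∑_{n=0}^∞ (−1)^{a_n} x^n, where a_n is the reduction modulo 2 of the sum of binary digits of n, is transcendental over the field of rational functions ℂ(x). -/
open Polynomial HahnSeries

/-- The Thue–Morse formal power series
`f_TM(x) = ∏_{n=0}^∞ (1 − x^{2^n}) = ∑_{n=0}^∞ (−1)^{a_n} x^n ∈ ℤ[[x]] ⊆ ℂ[[x]]`,
where `a_n` is the sum (mod 2) of the binary digits of `n`; its `n`-th coefficient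
is `(−1)^{(sum of binary digits of n)}`. -/
noncomputable def fTM : PowerSeries ℂ :=
  PowerSeries.mk fun n => (-1 : ℂ) ^ (Nat.digits 2 n).sum

open scoped RatFunc

namespace TM

def dbl : ℤ →+ ℤ := AddMonoidHom.mulLeft 2

noncomputable def σL : LaurentSeries ℂ →+* LaurentSeries ℂ :=
  HahnSeries.embDomainRingHom dbl (fun a b h => by simpa [dbl] using h)
    (fun a b => by simp [dbl])

lemma σL_coeff_even (f : LaurentSeries ℂ) (n : ℤ) : (σL f).coeff (2*n) = f.coeff n := by
  unfold σL embDomainRingHom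
  exact embDomain_coeff

lemma σL_coeff_odd (f : LaurentSeries ℂ) (n : ℤ) (h : ¬ (2:ℤ) ∣ n) : (σL f).coeff n = 0 := by
  unfold σL embDomainRingHom
  refine embDomain_notin_range ?_
  rintro ⟨m, hm⟩
  exact h ⟨m, by simpa [dbl] using hm.symm⟩

/-- binary digit sum -/
def s (n : ℕ) : ℕ := (Nat.digits 2 n).sum

lemma s_two_mul (m : ℕ) (hm : m ≠ 0) : s (2*m) = s m := by
  unfold s
  rw [Nat.digits_def' (by norm_num : 1 < 2) (by positivity)]
  simp [Nat.mul_div_cancel_left m (by norm_num : 0 < 2), Nat.mul_mod_right]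

lemma s_two_mul_add_one (m : ℕ) : s (2*m+1) = s m + 1 := by
  unfold s
  rw [Nat.digits_def' (by norm_num : 1 < 2) (by positivity)]
  have h1 : (2*m+1) % 2 = 1 := by omega
  have h2 : (2*m+1) / 2 = m := by omega
  rw [h1, h2]
  simp [Nat.add_comm]

/-- Thue-Morse series as a Laurent series -/
noncomputable abbrev F : LaurentSeries ℂ := (fTM : LaurentSeries ℂ)

lemma F_coeff (n : ℤ) : F.coeff n = if n < 0 then 0 else (-1 : ℂ) ^ s n.natAbs := by
  rw [PowerSeries.coeff_coe]
  congr 1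
  simp [fTM, s, PowerSeries.coeff_mk]

lemma F_coeff_nat (n : ℕ) : F.coeff (n : ℤ) = (-1 : ℂ) ^ s n := by
  rw [F_coeff]; simp

lemma F_ne_zero : F ≠ 0 := by
  intro h
  have := F_coeff_nat 0
  rw [h] at this
  simp [s] at this

/-- the functional equation F = (1 - x) σL F -/
lemma FE : F = (1 - HahnSeries.single (1:ℤ) (1:ℂ)) * σL F := by
  ext n
  rw [sub_mul, one_mul, HahnSeries.coeff_sub]
  have hsing : (HahnSeries.single (1:ℤ) (1:ℂ) * σL F).coeff n = (σL F).coeff (n-1) := by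
    have := HahnSeries.coeff_single_mul_add (r := (1:ℂ)) (x := σL F) (a := n-1) (b := (1:ℤ))
    rw [sub_add_cancel] at this
    rw [this, one_mul]
  rw [hsing]
  rcases Int.even_or_odd n with ⟨k, hk⟩ | ⟨k, hk⟩
  · -- n = 2k
    subst hk
    have h2k : k + k = 2 * k := by ring
    rw [h2k, σL_coeff_even]
    have hodd : ¬ (2:ℤ) ∣ (2*k - 1) := by omega
    rw [σL_coeff_odd _ _ hodd, sub_zero]
    rcases lt_or_ge k 0 with hneg | hpos
    · rw [F_coeff, F_coeff, if_pos (by omega), if_pos hneg]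
    · obtain ⟨m, rfl⟩ := Int.eq_ofNat_of_zero_le hpos
      have : ((2:ℤ) * m) = ((2*m : ℕ) : ℤ) := by push_cast; ring
      rw [this, F_coeff_nat, F_coeff_nat]
      rcases Nat.eq_zero_or_pos m with rfl | hm
      · simp
      · rw [s_two_mul m (by omega)]
  · -- n = 2k+1
    subst hk
    have hodd : ¬ (2:ℤ) ∣ (2*k + 1) := by omega
    rw [σL_coeff_odd _ _ hodd, zero_sub]
    have h2 : (2*k+1-1 : ℤ) = 2*k := by ring
    rw [h2, σL_coeff_even]
    rcases lt_or_ge k 0 with hneg | hpos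
    · rw [F_coeff, F_coeff, if_pos (by omega), if_pos hneg, neg_zero]
    · obtain ⟨m, rfl⟩ := Int.eq_ofNat_of_zero_le hpos
      have : ((2:ℤ) * m + 1) = ((2*m+1 : ℕ) : ℤ) := by push_cast; ring
      rw [this, F_coeff_nat, F_coeff_nat, s_two_mul_add_one]
      rw [pow_succ]
      ring


/-- substitution x ↦ x² on rational functions -/
noncomputable def σK : RatFunc ℂ →+* RatFunc ℂ :=
  IsFractionRing.lift (g := (algebraMap ℂ[X] (RatFunc ℂ)).comp (expand ℂ 2).toRingHom)
    (fun a b h => by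
      have := IsFractionRing.injective ℂ[X] (RatFunc ℂ) h
      exact expand_injective (by norm_num) this)

lemma σK_algebraMap (a : ℂ[X]) :
    σK (algebraMap ℂ[X] (RatFunc ℂ) a) = algebraMap ℂ[X] (RatFunc ℂ) (expand ℂ 2 a) :=
  IsFractionRing.lift_algebraMap _ _

lemma σL_single (n : ℤ) (c : ℂ) : σL (HahnSeries.single n c) = HahnSeries.single (2*n) c := by
  unfold σL embDomainRingHom
  exact embDomain_single

lemma algebraMap_poly_eq (a : ℂ[X]) :
    algebraMap ℂ[X] (LaurentSeries ℂ) a = ((a : PowerSeries ℂ) : LaurentSeries ℂ) := by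
  rw [IsScalarTower.algebraMap_apply ℂ[X] (RatFunc ℂ) (LaurentSeries ℂ)]
  exact (RatFunc.coe_coe a).symm

lemma algebraMap_monomial (n : ℕ) (c : ℂ) :
    algebraMap ℂ[X] (LaurentSeries ℂ) (Polynomial.monomial n c) = HahnSeries.single (n : ℤ) c := by
  rw [algebraMap_poly_eq]
  rw [← Polynomial.C_mul_X_pow_eq_monomial]
  push_cast [Polynomial.coe_mul, Polynomial.coe_C, Polynomial.coe_pow, Polynomial.coe_X]
  rw [ofPowerSeries_C, ofPowerSeries_X, single_pow, one_pow]
  rw [HahnSeries.C_apply, HahnSeries.single_mul_single, zero_add, mul_one]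
  norm_num

lemma σL_algebraMap_poly (a : ℂ[X]) :
    σL (algebraMap ℂ[X] (LaurentSeries ℂ) a)
      = algebraMap ℂ[X] (LaurentSeries ℂ) (expand ℂ 2 a) := by
  induction a using Polynomial.induction_on' with
  | add p q hp hq => simp only [map_add, hp, hq]
  | monomial n c =>
      rw [algebraMap_monomial, σL_single]
      have : expand ℂ 2 (Polynomial.monomial n c) = Polynomial.monomial (2*n) c := by
        rw [← Polynomial.C_mul_X_pow_eq_monomial, ← Polynomial.C_mul_X_pow_eq_monomial]
        simp [map_mul, Polynomial.expand_C, Polynomial.expand_X, ← pow_mul, mul_comm n 2]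
      rw [this, algebraMap_monomial]
      norm_cast

lemma σL_algebraMap (r : RatFunc ℂ) :
    σL (algebraMap (RatFunc ℂ) (LaurentSeries ℂ) r)
      = algebraMap (RatFunc ℂ) (LaurentSeries ℂ) (σK r) := by
  rw [← RatFunc.num_div_denom r]
  rw [map_div₀, map_div₀, map_div₀]
  rw [← IsScalarTower.algebraMap_apply, ← IsScalarTower.algebraMap_apply,
    σL_algebraMap_poly, σL_algebraMap_poly, σK_algebraMap, σK_algebraMap,
    IsScalarTower.algebraMap_apply ℂ[X] (RatFunc ℂ) (LaurentSeries ℂ),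
    IsScalarTower.algebraMap_apply ℂ[X] (RatFunc ℂ) (LaurentSeries ℂ), map_div₀]


lemma rm_C_mul {c : ℂ} (hc : c ≠ 0) (q : ℂ[X]) (hq : q ≠ 0) :
    rootMultiplicity 1 (Polynomial.C c * q) = rootMultiplicity 1 q := by
  rw [rootMultiplicity_mul (mul_ne_zero (by simpa using hc) hq),
    rootMultiplicity_eq_zero (by simp [IsRoot, hc]), zero_add]

lemma rm_one_sub_X_pow (k : ℕ) :
    rootMultiplicity 1 ((1 - X : ℂ[X]) ^ k) = k := by
  have h1 : (1 - X : ℂ[X]) = Polynomial.C (-1) * (X - Polynomial.C 1) := by simp [map_neg]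
  rw [h1, mul_pow, ← map_pow]
  rw [rm_C_mul (by simp : ((-1:ℂ)^k ≠ 0)) _ (pow_ne_zero _ (X_sub_C_ne_zero 1))]
  exact rootMultiplicity_X_sub_C_pow 1 k

lemma rm_expand {a : ℂ[X]} (ha : a ≠ 0) :
    rootMultiplicity 1 (expand ℂ 2 a) = rootMultiplicity 1 a := by
  obtain ⟨q, hq, hndvd⟩ := a.exists_eq_pow_rootMultiplicity_mul_and_not_dvd ha 1
  set m := rootMultiplicity 1 a
  have hqroot : ¬ IsRoot q 1 := fun h => hndvd (dvd_iff_isRoot.2 h)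
  have hq0 : q ≠ 0 := fun h => by simp [h, IsRoot] at hqroot
  have hexp : expand ℂ 2 a = ((X - Polynomial.C 1) * (X + Polynomial.C 1)) ^ m * expand ℂ 2 q := by
    rw [hq, map_mul, map_pow, map_sub, expand_X, expand_C]
    congr 2
    ring_nf
    simp [map_one]
  rw [hexp]
  have h1 : ((X - Polynomial.C 1) * (X + Polynomial.C 1) : ℂ[X]) ^ m ≠ 0 := by
    apply pow_ne_zero
    apply mul_ne_zero (X_sub_C_ne_zero 1)
    intro h
    have := congrArg (eval 0) h
    simp at this
  have h2 : expand ℂ 2 q ≠ 0 := by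
    rw [Ne, Polynomial.expand_eq_zero (by norm_num)]
    exact hq0
  rw [rootMultiplicity_mul (mul_ne_zero h1 h2), mul_pow,
    rootMultiplicity_mul (mul_ne_zero (pow_ne_zero _ (X_sub_C_ne_zero 1))
      (pow_ne_zero _ (fun h => by have := congrArg (eval 0) h; simp at this))),
    rootMultiplicity_X_sub_C_pow,
    rootMultiplicity_eq_zero (by simp [IsRoot] : ¬ IsRoot ((X + Polynomial.C 1 : ℂ[X])^m) 1),
    rootMultiplicity_eq_zero (p := expand ℂ 2 q) (by
      simp only [IsRoot, expand_eval, one_pow]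
      exact hqroot)]
  omega


end TM

open TM in
/-- **Transcendence of the Thue–Morse series over `ℂ(x)`.**
The series `f_TM`, viewed inside the field of formal Laurent series `ℂ((x))`,
is transcendental over the field `ℂ(x)` of rational functions. -/
theorem stmt_1 : Transcendental (RatFunc ℂ) (fTM : LaurentSeries ℂ) := by
  intro halg
  have hint : IsIntegral (RatFunc ℂ) F := halg.isIntegral
  set A := algebraMap (RatFunc ℂ) (LaurentSeries ℂ) with hAdef
  set p := minpoly (RatFunc ℂ) F with hpdef
  have hmonic : p.Monic := minpoly.monic hint
  have hp0 : p ≠ 0 := hmonic.ne_zero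
  set d := p.natDegree with hddef
  have hd : 0 < d := minpoly.natDegree_pos hint
  -- step 1: annihilation as a finite sum
  have h1 : ∑ i ∈ Finset.range (d+1), A (p.coeff i) * F ^ i = 0 := by
    have := minpoly.aeval (RatFunc ℂ) F
    rw [Polynomial.aeval_eq_sum_range] at this
    simpa [Algebra.smul_def] using this
  -- step 2: apply σL
  set G := σL F with hGdef
  have h2 : ∑ i ∈ Finset.range (d+1), A (σK (p.coeff i)) * G ^ i = 0 := by
    have := congrArg σL h1
    rw [map_sum, map_zero] at this
    rw [← this]
    refine Finset.sum_congr rfl fun i _ => ?_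
    rw [map_mul, map_pow, σL_algebraMap]
  set u : LaurentSeries ℂ := 1 - HahnSeries.single (1:ℤ) (1:ℂ) with hudef
  have hFu : F = u * G := FE
  have hAu : A (1 - RatFunc.X) = u := by
    rw [map_sub, map_one, hudef]
    congr 1
    exact RatFunc.coe_X
  -- the second annihilating polynomial
  set Q : Polynomial (RatFunc ℂ) :=
    ∑ i ∈ Finset.range (d+1),
      Polynomial.C (σK (p.coeff i) * (1 - RatFunc.X) ^ (d-i)) * Polynomial.X ^ i with hQdef
  have haevQ : Polynomial.aeval F Q = 0 := by
    rw [hQdef, map_sum]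
    have : ∀ i ∈ Finset.range (d+1),
        Polynomial.aeval F (Polynomial.C (σK (p.coeff i) * (1 - RatFunc.X) ^ (d-i))
          * Polynomial.X ^ i)
          = u ^ d * (A (σK (p.coeff i)) * G ^ i) := by
      intro i hi
      rw [map_mul, map_pow, Polynomial.aeval_X, Polynomial.aeval_C]
      rw [map_mul, map_pow, hAu]
      rw [hFu, mul_pow]
      have hle : i ≤ d := Nat.lt_succ_iff.mp (Finset.mem_range.mp hi)
      have huu : u ^ (d - i) * u ^ i = u ^ d := by
        rw [← _root_.pow_add, Nat.sub_add_cancel hle]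
      rw [← huu]
      ring
    rw [Finset.sum_congr rfl this, ← Finset.mul_sum, h2, mul_zero]
  -- Q's coefficients
  have hQcoeff : ∀ j, Q.coeff j =
      if j ≤ d then σK (p.coeff j) * (1 - RatFunc.X) ^ (d-j) else 0 := by
    intro j
    rw [hQdef, Polynomial.finset_sum_coeff]
    simp only [Polynomial.coeff_C_mul, Polynomial.coeff_X_pow, mul_ite, mul_one, mul_zero]
    rw [Finset.sum_ite_eq (Finset.range (d+1)) j]
    simp [Nat.lt_succ_iff]
  have hQd : Q.coeff d = 1 := by
    have hpd : p.coeff d = 1 := hmonic.coeff_natDegree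
    rw [hQcoeff d, if_pos le_rfl, Nat.sub_self, pow_zero, mul_one, hpd, map_one]
  have hQdegle : Q.natDegree ≤ d := Polynomial.natDegree_le_iff_coeff_eq_zero.mpr
      (fun m hm => by rw [hQcoeff m, if_neg (by omega)])
  have hQdeg : Q.natDegree = d :=
    le_antisymm hQdegle (Polynomial.le_natDegree_of_ne_zero (by rw [hQd]; exact one_ne_zero))
  have hQmonic : Q.Monic := by
    rw [Polynomial.Monic, Polynomial.leadingCoeff, hQdeg, hQd]
  -- Q = p
  obtain ⟨r, hr⟩ : p ∣ Q := minpoly.dvd (RatFunc ℂ) F haevQ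
  have hr0 : r ≠ 0 := by rintro rfl; rw [mul_zero] at hr; exact hQmonic.ne_zero hr
  have hrdeg : r.natDegree = 0 := by
    have h := Polynomial.natDegree_mul hp0 hr0
    rw [← hr, hQdeg] at h
    omega
  have hrC : r = Polynomial.C (r.coeff 0) := Polynomial.eq_C_of_natDegree_eq_zero hrdeg
  have hlc : (1 : RatFunc ℂ) = r.coeff 0 := by
    have h := congrArg Polynomial.leadingCoeff hr
    rw [Polynomial.leadingCoeff_mul, hmonic.leadingCoeff, one_mul, hQmonic.leadingCoeff] at h
    rwa [Polynomial.leadingCoeff, hrdeg] at h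
  have hQp : Q = p := by rw [hr, hrC, ← hlc, map_one, mul_one]
  -- coefficient relation
  have hrel : ∀ i, i ≤ d → σK (p.coeff i) * (1 - RatFunc.X) ^ (d - i) = p.coeff i := by
    intro i hi
    have h := congrArg (fun q => Polynomial.coeff q i) hQp
    rwa [hQcoeff i, if_pos hi] at h
  -- lower coefficients vanish
  have hzero : ∀ i, i < d → p.coeff i = 0 := by
    intro i hilt
    by_contra hne
    have hrel' := hrel i (le_of_lt hilt)
    set r0 : RatFunc ℂ := p.coeff i with hr0def
    set a := r0.num with hadef
    set b := r0.denom with hbdef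
    have hb0 : b ≠ 0 := r0.denom_ne_zero
    have ha0 : a ≠ 0 := RatFunc.num_ne_zero hne
    have hr00 : r0 = algebraMap ℂ[X] (RatFunc ℂ) a / algebraMap ℂ[X] (RatFunc ℂ) b :=
      (RatFunc.num_div_denom r0).symm
    have hσ : σK r0 = algebraMap ℂ[X] (RatFunc ℂ) (Polynomial.expand ℂ 2 a)
        / algebraMap ℂ[X] (RatFunc ℂ) (Polynomial.expand ℂ 2 b) := by
      rw [hr00, map_div₀, σK_algebraMap, σK_algebraMap]
    have h1X : (1 - RatFunc.X) = algebraMap ℂ[X] (RatFunc ℂ) (1 - Polynomial.X) := by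
      rw [map_sub, map_one, RatFunc.algebraMap_X]
    have hea : Polynomial.expand ℂ 2 a ≠ 0 := by
      rwa [Ne, Polynomial.expand_eq_zero (by norm_num)]
    have heb : Polynomial.expand ℂ 2 b ≠ 0 := by
      rwa [Ne, Polynomial.expand_eq_zero (by norm_num)]
    have hbK : algebraMap ℂ[X] (RatFunc ℂ) b ≠ 0 :=
      (map_ne_zero_iff _ (IsFractionRing.injective ℂ[X] (RatFunc ℂ))).mpr hb0
    have hebK : algebraMap ℂ[X] (RatFunc ℂ) (Polynomial.expand ℂ 2 b) ≠ 0 :=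
      (map_ne_zero_iff _ (IsFractionRing.injective ℂ[X] (RatFunc ℂ))).mpr heb
    rw [hσ, hr00, h1X, div_mul_eq_mul_div, div_eq_div_iff hebK hbK,
      ← map_pow, ← map_mul, ← map_mul, ← map_mul] at hrel'
    have key := IsFractionRing.injective ℂ[X] (RatFunc ℂ) hrel'
    have hw : ((1 - Polynomial.X : ℂ[X])) ^ (d - i) ≠ 0 := pow_ne_zero _ (by
      intro h
      have h0 := congrArg (Polynomial.eval 0) h
      simp at h0)
    have hcount := congrArg (Polynomial.rootMultiplicity 1) key
    rw [Polynomial.rootMultiplicity_mul (mul_ne_zero (mul_ne_zero hea hw) hb0),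
      Polynomial.rootMultiplicity_mul (mul_ne_zero hea hw),
      Polynomial.rootMultiplicity_mul (mul_ne_zero ha0 heb),
      rm_expand ha0, rm_expand hb0, rm_one_sub_X_pow] at hcount
    omega
  -- hence p = X ^ d, so F = 0, contradiction
  have hpX : p = Polynomial.X ^ d := by
    ext j
    rw [Polynomial.coeff_X_pow]
    rcases lt_trichotomy j d with h | h | h
    · rw [hzero j h, if_neg (by omega)]
    · subst h; rw [hmonic.coeff_natDegree, if_pos rfl]
    · rw [Polynomial.coeff_eq_zero_of_natDegree_lt (by omega), if_neg (by omega)]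
  have haev := minpoly.aeval (RatFunc ℂ) F
  rw [← hpdef, hpX, map_pow, Polynomial.aeval_X] at haev
  exact F_ne_zero (pow_eq_zero_iff (by omega) |>.mp haev)
end

section
/- Let U be a perfect field of characteristic p > 0 containing 𝔽_q, τ : U → U an 𝔽_q-automorphism, ℛ = U[X_1, …, X_N], D_1, …, D_N ∈ U^×, and B_1, …, B_N ∈ U. For P ∈ ℛ write P̃ := P^τ(D_1 X_1 + B_1, …, D_N X_N + B_N), where P^τ is P with τ applied to its coefficients. If P ∈ ℛ is a non-constant polynomial such that P̃/P ∈ ℛ, then there exists a polynomial G ∈ ℛ of the form G = ∑_{i=1}^N c_i X_i + B^p, with c_1, …, c_N ∈ U not all zero and B ∈ ℛ, such that G̃/G ∈ ℛ. Moreover, if W is the subfield of U generated by 𝔽_q and the coefficients of P, then there exists M ≥ 1 such that c^{p^M} ∈ W for every coefficient c of G. -/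
/-- The twist `P ↦ P̃ = P^τ(D₁X₁ + B₁, …, D_N X_N + B_N)` of a polynomial
`P ∈ ℛ = U[X₁,…,X_N]`, where `P^τ` is `P` with `τ` applied to its
coefficients. -/
noncomputable def polyTwist {U : Type*} [Field U] {N : ℕ}
    (τ : U ≃+* U) (D B : Fin N → U) (P : MvPolynomial (Fin N) U) :
    MvPolynomial (Fin N) U :=
  MvPolynomial.aeval
    (fun i => MvPolynomial.C (D i) * MvPolynomial.X i + MvPolynomial.C (B i))
    (MvPolynomial.map (τ : U →+* U) P)

open MvPolynomial

namespace Stmt19Aux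

variable {U : Type*} [Field U] {N : ℕ}

/-- The twist as a ring homomorphism. -/
noncomputable def twistHom (τ : U ≃+* U) (D B : Fin N → U) :
    MvPolynomial (Fin N) U →+* MvPolynomial (Fin N) U :=
  ((aeval fun i => C (D i) * X i + C (B i) :
      MvPolynomial (Fin N) U →ₐ[U] MvPolynomial (Fin N) U) :
    MvPolynomial (Fin N) U →+* MvPolynomial (Fin N) U).comp
    (map (τ : U →+* U))

lemma polyTwist_eq_twistHom (τ : U ≃+* U) (D B : Fin N → U) (P : MvPolynomial (Fin N) U) :
    _root_.polyTwist τ D B P = twistHom τ D B P := rfl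

lemma twistHom_C (τ : U ≃+* U) (D B : Fin N → U) (a : U) :
    twistHom τ D B (C a) = C (τ a) := by
  simp [twistHom]

lemma twistHom_X (τ : U ≃+* U) (D B : Fin N → U) (i : Fin N) :
    twistHom τ D B (X i) = C (D i) * X i + C (B i) := by
  simp [twistHom]

lemma twistHom_comp_eq_id (τ₁ τ₂ : U ≃+* U) (D₁ B₁ D₂ B₂ : Fin N → U)
    (hτ : ∀ a, τ₂ (τ₁ a) = a)
    (h1 : ∀ i, τ₂ (D₁ i) * D₂ i = 1)
    (h2 : ∀ i, τ₂ (D₁ i) * B₂ i + τ₂ (B₁ i) = 0)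
    (P : MvPolynomial (Fin N) U) :
    twistHom τ₂ D₂ B₂ (twistHom τ₁ D₁ B₁ P) = P := by
  have : (twistHom τ₂ D₂ B₂).comp (twistHom τ₁ D₁ B₁) = RingHom.id _ := by
    apply MvPolynomial.ringHom_ext
    · intro a
      simp [twistHom_C, hτ]
    · intro i
      simp only [RingHom.comp_apply, twistHom_X, RingHom.id_apply, map_add, map_mul,
        twistHom_C, twistHom_X]
      rw [show C (τ₂ (D₁ i)) * (C (D₂ i) * X i + C (B₂ i)) + C (τ₂ (B₁ i))
            = C (τ₂ (D₁ i) * D₂ i) * X i + C (τ₂ (D₁ i) * B₂ i + τ₂ (B₁ i)) by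
          push_cast [map_add, map_mul]; ring]
      rw [h1 i, h2 i]; simp
  calc twistHom τ₂ D₂ B₂ (twistHom τ₁ D₁ B₁ P)
      = ((twistHom τ₂ D₂ B₂).comp (twistHom τ₁ D₁ B₁)) P := rfl
    _ = P := by rw [this]; rfl

/-- Explicit inverse data for a twist. -/
lemma twist_inv_spec (τ : U ≃+* U) (D B : Fin N → U) (hD : ∀ i, D i ≠ 0) :
    (∀ P, twistHom τ.symm (fun i => τ.symm (D i)⁻¹) (fun i => τ.symm (-(B i) / D i))
        (twistHom τ D B P) = P) ∧
    (∀ P, twistHom τ D B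
        (twistHom τ.symm (fun i => τ.symm (D i)⁻¹) (fun i => τ.symm (-(B i) / D i)) P) = P) := by
  constructor
  · intro P
    apply twistHom_comp_eq_id
    · intro a; exact τ.symm_apply_apply a
    · intro i
      rw [← map_mul]
      rw [mul_inv_cancel₀ (hD i)]
      simp
    · intro i
      rw [← map_mul, ← map_add]
      rw [show D i * (-(B i) / D i) + B i = 0 by have := hD i; field_simp; ring]
      simp
  · intro P
    apply twistHom_comp_eq_id
    · intro a; exact τ.apply_symm_apply a
    · intro i
      simp only [RingEquiv.apply_symm_apply]
      have := hD i; field_simp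
    · intro i
      simp only [RingEquiv.apply_symm_apply]
      have := hD i; field_simp; ring


lemma totalDegree_map_eq (τ : U ≃+* U) (P : MvPolynomial (Fin N) U) :
    (map (τ : U →+* U) P).totalDegree = P.totalDegree := by
  simp only [MvPolynomial.totalDegree]
  rw [support_map_of_injective _ τ.injective]

lemma totalDegree_aeval_affine_le (g : Fin N → MvPolynomial (Fin N) U)
    (hg : ∀ i, (g i).totalDegree ≤ 1) (P : MvPolynomial (Fin N) U) :
    ((aeval g) P).totalDegree ≤ P.totalDegree := by
  conv_lhs => rw [P.as_sum]
  rw [map_sum]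
  apply totalDegree_finsetSum_le
  intro m hm
  rw [aeval_monomial]
  refine le_trans (totalDegree_mul _ _) ?_
  have h1 : (algebraMap U (MvPolynomial (Fin N) U) (coeff m P)).totalDegree = 0 :=
    totalDegree_C _
  rw [h1, zero_add]
  refine le_trans ?_ (le_totalDegree hm)
  refine le_trans (totalDegree_finset_prod _ _) ?_
  have : (m.sum fun _ e => e) = ∑ i ∈ m.support, m i := rfl
  rw [this]
  apply Finset.sum_le_sum
  intro i _
  calc (g i ^ m i).totalDegree ≤ m i * (g i).totalDegree := totalDegree_pow _ _
    _ ≤ m i * 1 := Nat.mul_le_mul_left _ (hg i)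
    _ = m i := Nat.mul_one _

lemma totalDegree_twist_le (τ : U ≃+* U) (D B : Fin N → U) (P : MvPolynomial (Fin N) U) :
    (twistHom τ D B P).totalDegree ≤ P.totalDegree := by
  have h : (twistHom τ D B P).totalDegree ≤ (map (τ : U →+* U) P).totalDegree := by
    show (aeval (fun i => C (D i) * X i + C (B i)) (map (τ : U →+* U) P)).totalDegree ≤ _
    apply totalDegree_aeval_affine_le
    intro i
    refine le_trans (totalDegree_add _ _) ?_
    simp only [max_le_iff]
    constructor
    · refine le_trans (totalDegree_mul _ _) ?_
      simp [totalDegree_C, totalDegree_X]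
    · simp [totalDegree_C]
  rw [totalDegree_map_eq] at h
  exact h

lemma totalDegree_twist (τ : U ≃+* U) (D B : Fin N → U) (hD : ∀ i, D i ≠ 0)
    (P : MvPolynomial (Fin N) U) :
    (twistHom τ D B P).totalDegree = P.totalDegree := by
  refine le_antisymm (totalDegree_twist_le _ _ _ _) ?_
  obtain ⟨hL, -⟩ := twist_inv_spec τ D B hD
  conv_lhs => rw [← hL P]
  exact totalDegree_twist_le _ _ _ _

lemma twist_injective (τ : U ≃+* U) (D B : Fin N → U) (hD : ∀ i, D i ≠ 0) :
    Function.Injective (twistHom τ D B) := by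
  obtain ⟨hL, -⟩ := twist_inv_spec τ D B hD
  exact Function.LeftInverse.injective hL

/-- Auxiliary embedding recording the total degree in a single-variable degree. -/
noncomputable def phi : MvPolynomial (Fin N) U →+* Polynomial (MvPolynomial (Fin N) U) :=
  eval₂Hom (Polynomial.C.comp C) fun i => Polynomial.C (X i) * Polynomial.X

lemma phi_apply (P : MvPolynomial (Fin N) U) :
    phi P = ∑ m ∈ P.support,
      Polynomial.C (monomial m (coeff m P)) * Polynomial.X ^ (m.sum fun _ e => e) := by
  conv_lhs => rw [P.as_sum]
  rw [map_sum]
  apply Finset.sum_congr rfl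
  intro m _
  rw [show (phi (monomial m (coeff m P)) : Polynomial (MvPolynomial (Fin N) U))
      = eval₂ (Polynomial.C.comp C) (fun i => Polynomial.C (X i) * Polynomial.X)
          (monomial m (coeff m P)) from rfl]
  rw [eval₂_monomial]
  rw [show (m.prod fun i e => (Polynomial.C (X i : MvPolynomial (Fin N) U)
        * Polynomial.X) ^ e)
      = ∏ i ∈ m.support, (Polynomial.C (X i : MvPolynomial (Fin N) U)
        * Polynomial.X) ^ m i from rfl]
  simp only [mul_pow, ← Polynomial.C_pow]
  rw [Finset.prod_mul_distrib, ← map_prod, Finset.prod_pow_eq_pow_sum]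
  rw [show (m.sum fun _ e => e) = ∑ i ∈ m.support, m i from rfl]
  rw [monomial_eq]
  rw [show (m.prod fun n e => (X n : MvPolynomial (Fin N) U) ^ e)
      = ∏ i ∈ m.support, (X i : MvPolynomial (Fin N) U) ^ m i from rfl]
  simp only [RingHom.comp_apply, map_mul]
  ring

lemma coeff_phi_totalDegree {P : MvPolynomial (Fin N) U} (hP : P ≠ 0) :
    Polynomial.coeff (phi P) P.totalDegree ≠ 0 := by
  classical
  obtain ⟨m₀, hm₀, hdeg⟩ := P.support.exists_mem_eq_sup
    (MvPolynomial.support_nonempty.mpr hP) fun s => s.sum fun _ e => e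
  have hdeg' : P.totalDegree = m₀.sum fun _ e => e := hdeg
  rw [phi_apply]
  rw [Polynomial.finset_sum_coeff]
  intro hcontra
  have h0 : MvPolynomial.coeff m₀ (∑ m ∈ P.support,
      Polynomial.coeff (Polynomial.C (monomial m (coeff m P))
        * Polynomial.X ^ (m.sum fun _ e => e)) P.totalDegree) = 0 := by
    rw [hcontra]; simp
  rw [MvPolynomial.coeff_sum] at h0
  rw [Finset.sum_eq_single m₀] at h0
  · rw [Polynomial.coeff_C_mul, Polynomial.coeff_X_pow] at h0
    rw [if_pos hdeg'] at h0
    simp only [mul_one, MvPolynomial.coeff_monomial, if_pos rfl] at h0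
    exact (mem_support_iff.mp hm₀) h0
  · intro m hm hne
    rw [Polynomial.coeff_C_mul, Polynomial.coeff_X_pow]
    by_cases h : P.totalDegree = (m.sum fun _ e => e)
    · rw [if_pos h, mul_one, MvPolynomial.coeff_monomial, if_neg hne]
    · rw [if_neg h, mul_zero]
      simp
  · intro h; exact absurd hm₀ h

lemma natDegree_phi {P : MvPolynomial (Fin N) U} (hP : P ≠ 0) :
    (phi P).natDegree = P.totalDegree := by
  refine le_antisymm ?_ (Polynomial.le_natDegree_of_ne_zero (coeff_phi_totalDegree hP))
  rw [phi_apply]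
  apply Polynomial.natDegree_sum_le_of_forall_le
  intro m hm
  refine le_trans (Polynomial.natDegree_C_mul_le _ _) ?_
  refine le_trans (Polynomial.natDegree_X_pow_le _) ?_
  exact le_totalDegree hm

lemma phi_ne_zero {P : MvPolynomial (Fin N) U} (hP : P ≠ 0) : phi P ≠ 0 := by
  intro h
  apply coeff_phi_totalDegree hP
  rw [h]; simp

lemma totalDegree_mul_eq {P Q : MvPolynomial (Fin N) U} (hP : P ≠ 0) (hQ : Q ≠ 0) :
    (P * Q).totalDegree = P.totalDegree + Q.totalDegree := by
  have h : phi (P * Q) = phi P * phi Q := map_mul _ _ _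
  have hPQ : P * Q ≠ 0 := mul_ne_zero hP hQ
  rw [← natDegree_phi hPQ, h, Polynomial.natDegree_mul (phi_ne_zero hP) (phi_ne_zero hQ),
    natDegree_phi hP, natDegree_phi hQ]

lemma totalDegree_pow_eq (n : ℕ) {P : MvPolynomial (Fin N) U} (hP : P ≠ 0) :
    (P ^ n).totalDegree = n * P.totalDegree := by
  induction n with
  | zero => simp
  | succ n ih =>
    rw [pow_succ, totalDegree_mul_eq (pow_ne_zero _ hP) hP, ih]
    ring

lemma eq_C_of_totalDegree_eq_zero {P : MvPolynomial (Fin N) U} (h : P.totalDegree = 0) :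
    P = C (coeff 0 P) := by
  ext m
  rw [MvPolynomial.coeff_C]
  by_cases hm : (0 : Fin N →₀ ℕ) = m
  · rw [if_pos hm, ← hm]
  · rw [if_neg hm]
    by_contra hc
    have hmem : m ∈ P.support := mem_support_iff.mpr hc
    have := (MvPolynomial.totalDegree_eq_zero_iff (p := P)).mp h m hmem
    exact hm (by ext i; simp [this i])


lemma coeff_pderiv (i : Fin N) (P : MvPolynomial (Fin N) U) (m : Fin N →₀ ℕ) :
    coeff m (pderiv i P) = ((m i + 1 : ℕ) : U) * coeff (m + Finsupp.single i 1) P := by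
  induction P using MvPolynomial.induction_on' with
  | add p q hp hq => simp only [map_add, MvPolynomial.coeff_add, hp, hq, mul_add]
  | monomial s a =>
    rw [pderiv_monomial, MvPolynomial.coeff_monomial, MvPolynomial.coeff_monomial]
    by_cases hs : s = m + Finsupp.single i 1
    · subst hs
      have h1 : m + Finsupp.single i 1 - Finsupp.single i 1 = m := by
        ext j; simp [Finsupp.single_apply]
      rw [if_pos h1, if_pos rfl]
      have h2 : ((m + Finsupp.single i 1 : Fin N →₀ ℕ)) i = m i + 1 := by
        rw [Finsupp.add_apply, Finsupp.single_eq_same]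
      rw [h2]
      push_cast
      ring
    · rw [if_neg hs]
      rw [mul_zero]
      by_cases hsi : s i = 0
      · by_cases hss : s - Finsupp.single i 1 = m
        · rw [if_pos hss, hsi]
          simp
        · rw [if_neg hss]
      · have hle : Finsupp.single i 1 ≤ s := by
          rw [Finsupp.single_le_iff]
          omega
        have : s - Finsupp.single i 1 ≠ m := by
          intro hh
          apply hs
          rw [← hh, tsub_add_cancel_of_le hle]
        rw [if_neg this]

lemma support_mem_dvd_of_pderiv_eq_zero {p : ℕ} [Fact p.Prime] [CharP U p]
    {P : MvPolynomial (Fin N) U} (h : ∀ i, pderiv i P = 0)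
    {m : Fin N →₀ ℕ} (hm : m ∈ P.support) (i : Fin N) : p ∣ m i := by
  by_cases h0 : m i = 0
  · simp [h0]
  · have hle : Finsupp.single i 1 ≤ m := by
      rw [Finsupp.single_le_iff]; omega
    have hcoeff : coeff (m - Finsupp.single i 1) (pderiv i P) = 0 := by
      rw [h i]; simp
    rw [coeff_pderiv, tsub_add_cancel_of_le hle] at hcoeff
    have harg : ((m - Finsupp.single i 1 : Fin N →₀ ℕ)) i + 1 = m i := by
      rw [Finsupp.tsub_apply, Finsupp.single_eq_same]
      omega
    rw [harg] at hcoeff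
    rcases mul_eq_zero.mp hcoeff with hc | hc
    · exact (CharP.cast_eq_zero_iff U p (m i)).mp hc
    · exact absurd hc (mem_support_iff.mp hm)

lemma totalDegree_pderiv_lt {i : Fin N} {P : MvPolynomial (Fin N) U}
    (h : pderiv i P ≠ 0) : (pderiv i P).totalDegree < P.totalDegree := by
  have key : ∀ m ∈ (pderiv i P).support, (m.sum fun _ e => e) + 1 ≤ P.totalDegree := by
    intro m hm
    have hc := mem_support_iff.mp hm
    rw [coeff_pderiv] at hc
    have hc2 : coeff (m + Finsupp.single i 1) P ≠ 0 := by
      intro hh; apply hc; rw [hh, mul_zero]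
    have hmem : m + Finsupp.single i 1 ∈ P.support := mem_support_iff.mpr hc2
    have := le_totalDegree hmem
    have hsum : ((m + Finsupp.single i 1).sum fun _ e => e) = (m.sum fun _ e => e) + 1 := by
      rw [Finsupp.sum_add_index' (fun _ => rfl) fun _ _ _ => rfl]
      simp [Finsupp.sum_single_index]
    omega
  obtain ⟨m₀, hm₀⟩ := MvPolynomial.support_nonempty.mpr h
  have hpos : 0 < P.totalDegree := by
    have := key m₀ hm₀; omega
  rw [show (pderiv i P).totalDegree = (pderiv i P).support.sup (fun s => s.sum fun _ e => e)
      from rfl]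
  rw [Finset.sup_lt_iff (by exact hpos)]
  intro m hm
  have := key m hm; omega


section CharP

variable {p : ℕ} [Fact p.Prime] [CharP U p]

lemma coeff_pow_char (R : MvPolynomial (Fin N) U) (m : Fin N →₀ ℕ) :
    coeff (p • m) (R ^ p) = (coeff m R) ^ p := by
  classical
  have hp : 0 < p := (Fact.out : p.Prime).pos
  conv_lhs => rw [R.as_sum]
  rw [sum_pow_char]
  have hterm : ∀ v : Fin N →₀ ℕ, (monomial v (coeff v R)) ^ p
      = monomial (p • v) ((coeff v R) ^ p) := fun v => monomial_pow
  simp only [hterm]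
  rw [MvPolynomial.coeff_sum]
  have hinj : ∀ v w : Fin N →₀ ℕ, p • v = p • w → v = w := by
    intro v w hvw
    ext j
    have : p * v j = p * w j := by
      have := congrArg (fun f : Fin N →₀ ℕ => f j) hvw
      simpa [Finsupp.smul_apply] using this
    exact Nat.eq_of_mul_eq_mul_left hp this
  by_cases hm : m ∈ R.support
  · rw [Finset.sum_eq_single m]
    · rw [MvPolynomial.coeff_monomial, if_pos rfl]
    · intro v hv hne
      rw [MvPolynomial.coeff_monomial, if_neg]
      exact fun hh => hne (hinj v m hh)
    · intro h; exact absurd hm h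
  · have hm0 : coeff m R = 0 := by rwa [mem_support_iff, not_not] at hm
    rw [hm0, zero_pow hp.ne']
    apply Finset.sum_eq_zero
    intro v hv
    rw [MvPolynomial.coeff_monomial, if_neg]
    intro hh
    exact hm (hinj v m hh ▸ hv)

lemma exists_pth_root [PerfectRing U p] {Q : MvPolynomial (Fin N) U}
    (h : ∀ m ∈ Q.support, ∀ i, p ∣ m i) : ∃ R : MvPolynomial (Fin N) U, R ^ p = Q := by
  classical
  refine ⟨∑ m ∈ Q.support, monomial (m.mapRange (· / p) (Nat.zero_div p))
    ((frobeniusEquiv U p).symm (coeff m Q)), ?_⟩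
  rw [sum_pow_char]
  have : ∀ m ∈ Q.support, (monomial (m.mapRange (· / p) (Nat.zero_div p))
      ((frobeniusEquiv U p).symm (coeff m Q))) ^ p = monomial m (coeff m Q) := by
    intro m hm
    have h1 : p • m.mapRange (· / p) (Nat.zero_div p) = m := by
      ext j
      rw [Finsupp.smul_apply, Finsupp.mapRange_apply, smul_eq_mul]
      exact Nat.mul_div_cancel' (h m hm j)
    have h2 : ((frobeniusEquiv U p).symm (coeff m Q)) ^ p = coeff m Q := by
      have := frobenius_apply_frobeniusEquiv_symm U p (coeff m Q)
      rwa [frobenius_def] at this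
    rw [monomial_pow, h1, h2]
  rw [Finset.sum_congr rfl this]
  exact Q.support_sum_monomial_coeff

lemma pow_char_injective (a b : MvPolynomial (Fin N) U) (h : a ^ p = b ^ p) : a = b := by
  have hp : 0 < p := (Fact.out : p.Prime).pos
  have : (a - b) ^ p = 0 := by
    rw [sub_pow_char, h, sub_self]
  have h2 := pow_eq_zero_iff hp.ne' |>.mp this
  exact sub_eq_zero.mp h2

end CharP


lemma pderiv_aeval_affine (D B : Fin N → U) (i : Fin N) (Q : MvPolynomial (Fin N) U) :
    pderiv i (aeval (fun j => C (D j) * X j + C (B j)) Q)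
      = C (D i) * aeval (fun j => C (D j) * X j + C (B j)) (pderiv i Q) := by
  induction Q using MvPolynomial.induction_on with
  | C a => simp
  | add q r hq hr => simp only [map_add, hq, hr, mul_add]
  | mul_X q j hq =>
    by_cases hij : j = i
    · subst hij
      simp only [map_mul, aeval_X, pderiv_mul, hq, map_add, pderiv_C_mul, pderiv_X_self,
        pderiv_C, mul_one, add_zero, mul_zero]
      ring
    · simp only [map_mul, aeval_X, pderiv_mul, hq, map_add, pderiv_C_mul,
        pderiv_X_of_ne hij, pderiv_C, mul_zero, add_zero]
      ring

lemma pderiv_twist (τ : U ≃+* U) (D B : Fin N → U) (i : Fin N) (P : MvPolynomial (Fin N) U) :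
    pderiv i (twistHom τ D B P) = C (D i) * twistHom τ D B (pderiv i P) := by
  rw [← polyTwist_eq_twistHom, ← polyTwist_eq_twistHom, polyTwist, polyTwist]
  rw [pderiv_aeval_affine, pderiv_map]

lemma twist_pderiv_eq {τ : U ≃+* U} {D B : Fin N → U} (hD : ∀ i, D i ≠ 0)
    {P : MvPolynomial (Fin N) U} {q : U} (hT : twistHom τ D B P = C q * P) (i : Fin N) :
    twistHom τ D B (pderiv i P) = C ((D i)⁻¹ * q) * pderiv i P := by
  have h := pderiv_twist τ D B i P
  rw [hT, pderiv_C_mul] at h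
  apply mul_left_cancel₀ (show (C (D i) : MvPolynomial (Fin N) U) ≠ 0 by
    simp [MvPolynomial.C_eq_zero, hD i])
  rw [← h, ← mul_assoc, ← map_mul,
    show (D i) * ((D i)⁻¹ * q) = q by have := hD i; field_simp]


lemma descent {p : ℕ} [Fact p.Prime] [CharP U p] [PerfectRing U p]
    (τ : U ≃+* U) (D B : Fin N → U) (hD : ∀ i, D i ≠ 0) (W : Subfield U) :
    ∀ d : ℕ, ∀ P : MvPolynomial (Fin N) U, P.totalDegree ≤ d → 0 < P.totalDegree →
    ∀ q : U, twistHom τ D B P = C q * P →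
    ∀ M : ℕ, (∀ m, (P.coeff m) ^ p ^ M ∈ W) →
    ∃ (c : Fin N → U) (Bp : MvPolynomial (Fin N) U),
      (∃ i, c i ≠ 0) ∧
      ((∑ i : Fin N, C (c i) * X i) + Bp ^ p) ∣
        twistHom τ D B ((∑ i : Fin N, C (c i) * X i) + Bp ^ p) ∧
      ∃ M' : ℕ, 1 ≤ M' ∧
        ∀ m, (((∑ i : Fin N, C (c i) * X i) + Bp ^ p).coeff m) ^ p ^ M' ∈ W := by
  intro d
  induction d with
  | zero => intro P hPd hP0 q hq M hM; omega
  | succ d ih =>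
    intro P hPd hP0 q hq M hM
    have hp2 : 2 ≤ p := (Fact.out : p.Prime).two_le
    have hPne : P ≠ 0 := fun h => by simp [h] at hP0
    by_cases hder : ∀ i, pderiv i P = 0
    · -- P is a p-th power
      obtain ⟨R, hR⟩ := exists_pth_root (p := p) fun m hm i =>
        support_mem_dvd_of_pderiv_eq_zero hder hm i
      have hRne : R ≠ 0 := by
        rintro rfl
        rw [zero_pow (by omega)] at hR
        exact hPne hR.symm
      have hdegR : P.totalDegree = p * R.totalDegree := by
        rw [← hR, totalDegree_pow_eq _ hRne]
      have hRpos : 0 < R.totalDegree := by nlinarith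
      have hRlt : R.totalDegree < P.totalDegree := by nlinarith
      have hfrob : ((frobeniusEquiv U p).symm q) ^ p = q := by
        have := frobenius_apply_frobeniusEquiv_symm U p q
        rwa [frobenius_def] at this
      have hq' : twistHom τ D B R = C ((frobeniusEquiv U p).symm q) * R := by
        apply pow_char_injective (p := p)
        rw [mul_pow, ← map_pow, ← map_pow, hfrob, hR, hq]
      have hMR : ∀ m, (R.coeff m) ^ p ^ (M + 1) ∈ W := by
        intro m
        rw [pow_succ', pow_mul, ← coeff_pow_char (p := p) R m, hR]
        exact hM _
      exact ih R (by omega) hRpos _ hq' (M + 1) hMR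
    · push_neg at hder
      obtain ⟨j, hj⟩ := hder
      by_cases hconst : ∀ i, (pderiv i P).totalDegree = 0
      · -- terminal case: all partial derivatives constant
        set c : Fin N → U := fun i => coeff 0 (pderiv i P) with hc
        have hci : ∀ i, pderiv i P = C (c i) := fun i =>
          eq_C_of_totalDegree_eq_zero (hconst i)
        have hQ : ∀ i, pderiv i (P - ∑ k : Fin N, C (c k) * X k) = 0 := by
          intro i
          rw [map_sub, hci i, map_sum]
          rw [show ∑ k : Fin N, pderiv i (C (c k) * X k) = C (c i) from ?_]
          · ring
          · rw [Finset.sum_eq_single i]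
            · rw [pderiv_C_mul, pderiv_X_self, mul_one]
            · intro k _ hk
              rw [pderiv_C_mul, pderiv_X_of_ne hk, mul_zero]
            · intro h; exact absurd (Finset.mem_univ i) h
        obtain ⟨Bp, hBp⟩ := exists_pth_root (p := p) fun m hm i =>
          support_mem_dvd_of_pderiv_eq_zero hQ hm i
        have hG : (∑ i : Fin N, C (c i) * X i) + Bp ^ p = P := by
          rw [hBp]; ring
        refine ⟨c, Bp, ⟨j, ?_⟩, ?_, M + 1, by omega, ?_⟩
        · intro h
          apply hj
          rw [hci j, h, map_zero]
        · rw [hG, hq]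
          exact ⟨C q, mul_comm _ _⟩
        · intro m
          rw [hG, pow_succ, pow_mul]
          exact pow_mem (hM m) p
      · push_neg at hconst
        obtain ⟨i, hi⟩ := hconst
        have hipos : 0 < (pderiv i P).totalDegree := Nat.pos_of_ne_zero hi
        have hine : pderiv i P ≠ 0 := fun h => by simp [h] at hipos
        have hlt := totalDegree_pderiv_lt hine
        have hq' := twist_pderiv_eq hD hq i
        have hMi : ∀ m, ((pderiv i P).coeff m) ^ p ^ M ∈ W := by
          intro m
          rw [coeff_pderiv, mul_pow]
          exact mul_mem (pow_mem (natCast_mem W _) _) (hM _)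
        exact ih (pderiv i P) (by omega) hipos _ hq' M hMi

end Stmt19Aux


/-- **Proposition (key lemma for Kubota-type results in characteristic `p`).**
Let `U` be a perfect field of characteristic `p > 0` containing `𝔽_q`, and let
`τ : U → U` be an `𝔽_q`-automorphism.  Let `ℛ = U[X₁,…,X_N]`, `D_i ∈ U^×`,
`B_i ∈ U`, and write `P̃ = P^τ(D₁X₁+B₁, …, D_N X_N+B_N)`.  If `P ∈ ℛ` is a
non-constant polynomial with `P̃/P ∈ ℛ` (i.e. `P ∣ P̃`), then there is a
polynomial `G = ∑_i c_i X_i + B^p ∈ ℛ`, with `c_1, …, c_N ∈ U` not all zero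
and `B ∈ ℛ`, such that `G ∣ G̃`; moreover, if `W` is the subfield of `U`
generated by `𝔽_q` and the coefficients of `P`, then there exists `M ≥ 1`
with `c^{p^M} ∈ W` for every coefficient `c` of `G`. -/
theorem stmt_19 (p : ℕ) [Fact p.Prime]
    (U : Type*) [Field U] [CharP U p] [PerfectRing U p]
    (Fq : Type*) [Field Fq] [Fintype Fq] [Algebra Fq U]
    (τ : U ≃+* U) (hτFq : ∀ a : Fq, τ (algebraMap Fq U a) = algebraMap Fq U a)
    (N : ℕ) (D B : Fin N → U) (hD : ∀ i, D i ≠ 0)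
    (P : MvPolynomial (Fin N) U)
    (hPnc : 0 < P.totalDegree)
    (hdvd : P ∣ polyTwist τ D B P) :
    ∃ (c : Fin N → U) (Bp : MvPolynomial (Fin N) U),
      (∃ i, c i ≠ 0) ∧
      (∑ i : Fin N, MvPolynomial.C (c i) * MvPolynomial.X i + Bp ^ p) ∣
        polyTwist τ D B (∑ i : Fin N, MvPolynomial.C (c i) * MvPolynomial.X i + Bp ^ p) ∧
      ∃ M : ℕ, 1 ≤ M ∧
        ∀ m : Fin N →₀ ℕ,
          ((∑ i : Fin N, MvPolynomial.C (c i) * MvPolynomial.X i + Bp ^ p).coeff m) ^ p ^ M ∈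
            Subfield.closure (Set.range (algebraMap Fq U) ∪ Set.range P.coeff) := by
  classical
  have hPne : P ≠ 0 := fun h => by simp [h] at hPnc
  obtain ⟨S, hS⟩ := hdvd
  rw [Stmt19Aux.polyTwist_eq_twistHom] at hS
  have hTdeg := Stmt19Aux.totalDegree_twist τ D B hD P
  have hTne : Stmt19Aux.twistHom τ D B P ≠ 0 := by
    intro h
    exact hPne (Stmt19Aux.twist_injective τ D B hD (by rw [h, map_zero]))
  have hSne : S ≠ 0 := fun h => hTne (by rw [hS, h, mul_zero])
  have hdegS : S.totalDegree = 0 := by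
    have h2 := Stmt19Aux.totalDegree_mul_eq hPne hSne
    rw [← hS, hTdeg] at h2
    omega
  have hSC : S = MvPolynomial.C (S.coeff 0) := Stmt19Aux.eq_C_of_totalDegree_eq_zero hdegS
  set W := Subfield.closure (Set.range (algebraMap Fq U) ∪ Set.range P.coeff) with hW
  have hM : ∀ m, (P.coeff m) ^ p ^ 1 ∈ W := by
    intro m
    apply pow_mem
    apply Subfield.subset_closure
    exact Or.inr ⟨m, rfl⟩
  have hq : Stmt19Aux.twistHom τ D B P = MvPolynomial.C (S.coeff 0) * P := by
    rw [hS]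
    conv_lhs => rw [hSC]
    ring
  obtain ⟨c, Bp, h1, h2, M, hM1, hM2⟩ :=
    Stmt19Aux.descent τ D B hD W P.totalDegree P le_rfl hPnc _ hq 1 hM
  exact ⟨c, Bp, h1, by rw [Stmt19Aux.polyTwist_eq_twistHom]; exact h2, M, hM1, hM2⟩
end
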